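/- Let v₀ be defined by v₀(x) = p₀q₀eˣ for x < -q₀, v₀(x) = -p₀e^{-q₀}x for -q₀ ≤ x ≤ q₀, and v₀(x) = -p₀q₀e^{-x} for x > q₀, with p₀ > 0 and q₀ > 0. Then the Fourier transform of v₀ satisfies v̂₀(ξ) = 2i p₀ e^{-q₀} ( q₀ sin(q₀ξ)/(1+ξ²) + sin(q₀ξ)/ξ² − q₀ cos(q₀ξ)/((1+ξ²)ξ) ) for all ξ ≠ 0. -/

import Mathlib

open Real MeasureTheory Complex

section AuxLemmas
open Set Filter

lemma integrableOn_cexp_Ioi {c : ℂ} (hc : c.re < 0) (a : ℝ) :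
    IntegrableOn (fun x : ℝ => Complex.exp (c * x)) (Ioi a) := by
  have hb : 0 < -c.re := by linarith
  have h1 : IntegrableOn (fun x : ℝ => Real.exp (-(-c.re) * x)) (Ioi a) :=
    exp_neg_integrableOn_Ioi a hb
  refine Integrable.mono' h1 ?_ ?_
  · exact (Complex.continuous_exp.comp (by continuity)).aestronglyMeasurable
  · filter_upwards with x
    rw [Complex.norm_exp]
    simp [Complex.mul_re]

lemma integral_cexp_Ioi {c : ℂ} (hc : c.re < 0) (a : ℝ) :
    ∫ x in Ioi a, Complex.exp (c * x) = -Complex.exp (c * a) / c := by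
  have hc0 : c ≠ 0 := fun h => by simp [h] at hc
  have key := integral_Ioi_of_hasDerivAt_of_tendsto'
    (f := fun x : ℝ => Complex.exp (c * x) / c) (f' := fun x : ℝ => Complex.exp (c * x))
    (a := a) (m := 0) ?_ (integrableOn_cexp_Ioi hc a) ?_
  · rw [key]; ring
  · intro x _
    have h1 : HasDerivAt (fun z : ℂ => Complex.exp (c * z) / c) (Complex.exp (c * x)) (x : ℂ) := by
      have h2 : HasDerivAt (fun z : ℂ => Complex.exp (c * z)) (c * Complex.exp (c * x)) (x : ℂ) := by
        simpa [Function.comp_def, mul_comm] using (Complex.hasDerivAt_exp (c * x)).comp (x : ℂ)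
          ((hasDerivAt_id (x : ℂ)).const_mul c)
      simpa [mul_div_assoc, mul_div_cancel_left₀ _ hc0] using h2.div_const c
    exact h1.comp_ofReal
  · rw [tendsto_zero_iff_norm_tendsto_zero]
    have h3 : Tendsto (fun x : ℝ => Real.exp (c.re * x) / ‖c‖) atTop (nhds 0) := by
      have h4 : Tendsto (fun x : ℝ => c.re * x) atTop atBot :=
        tendsto_id.const_mul_atTop_of_neg hc
      simpa using (Real.tendsto_exp_atBot.comp h4).div_const ‖c‖
    refine h3.congr fun x => ?_
    rw [norm_div, Complex.norm_exp]
    simp [Complex.mul_re]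

lemma integrableOn_cexp_Iic {c : ℂ} (hc : 0 < c.re) (a : ℝ) :
    IntegrableOn (fun x : ℝ => Complex.exp (c * x)) (Iic a) := by
  have h : IntegrableOn (fun x : ℝ => Complex.exp (c * (-x))) (Ici (-a)) := by
    rw [integrableOn_Ici_iff_integrableOn_Ioi]
    have := integrableOn_cexp_Ioi (c := -c) (by simpa using hc) (-a)
    refine this.congr_fun (fun x _ => by ring_nf) measurableSet_Ioi
  rw [← integrable_indicator_iff measurableSet_Iic]
  have h2 := ((integrable_indicator_iff measurableSet_Ici).2 h).comp_neg
  refine h2.congr ?_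
  filter_upwards with x
  by_cases hx : x ≤ a
  · simp [Set.indicator, hx, neg_le_neg hx, neg_neg]
  · have : ¬ (-a ≤ -x) := by simpa using hx
    simp [Set.indicator, hx, this]

lemma integral_cexp_Iic {c : ℂ} (hc : 0 < c.re) (a : ℝ) :
    ∫ x in Iic a, Complex.exp (c * x) = Complex.exp (c * a) / c := by
  have hc0 : c ≠ 0 := fun h => by simp [h] at hc
  have := integral_comp_neg_Ioi (-a) (fun x : ℝ => Complex.exp (c * x))
  rw [neg_neg] at this
  rw [← this]
  have h2 : ∀ x : ℝ, Complex.exp (c * ↑(-x)) = Complex.exp ((-c) * x) := by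
    intro x; push_cast; ring_nf
  rw [show (fun x : ℝ => Complex.exp (c * ↑(-x))) = fun x : ℝ => Complex.exp ((-c) * x) from
    funext h2]
  rw [integral_cexp_Ioi (by simpa using hc) (-a),
    show (-c) * ((-a : ℝ) : ℂ) = c * a by push_cast; ring]
  ring

end AuxLemmas

/-- The anti-symmetric peakon-antipeakon profile. -/
noncomputable def v0 (p q : ℝ) : ℝ → ℝ := fun x =>
  if x < -q then p * q * Real.exp x
  else if x ≤ q then -p * Real.exp (-q) * x
  else -p * q * Real.exp (-x)

open Set Filter in
theorem v0_fourier (p q : ℝ) (hp : 0 < p) (hq : 0 < q) :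
    ∀ ξ : ℝ, ξ ≠ 0 →
      (∫ x : ℝ, Complex.exp (-Complex.I * x * ξ) * (v0 p q x : ℂ)) =
        2 * Complex.I * (p : ℂ) * (Real.exp (-q) : ℂ) *
          ((q * Real.sin (q * ξ) / (1 + ξ ^ 2) + Real.sin (q * ξ) / ξ ^ 2
            - q * Real.cos (q * ξ) / ((1 + ξ ^ 2) * ξ) : ℝ) : ℂ) := by
  intro ξ hξ
  have hq' : -q ≤ q := by linarith
  set f : ℝ → ℂ := fun x => Complex.exp (-Complex.I * x * ξ) * (v0 p q x : ℂ) with hf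
  set c₁ : ℂ := 1 - Complex.I * ξ with hc₁
  set c₂ : ℂ := -Complex.I * ξ with hc₂
  set c₃ : ℂ := -1 - Complex.I * ξ with hc₃
  have hc₁re : 0 < c₁.re := by simp [hc₁]
  have hc₃re : c₃.re < 0 := by simp [hc₃]
  have hξC : (ξ : ℂ) ≠ 0 := Complex.ofReal_ne_zero.mpr hξ
  have hc₂0 : c₂ ≠ 0 := by
    simp only [hc₂, neg_mul, neg_ne_zero]
    exact mul_ne_zero Complex.I_ne_zero hξC
  -- pointwise formulas on the three regions
  have hE1 : ∀ x ∈ Iic (-q), f x = (p * q : ℂ) * Complex.exp (c₁ * x) := by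
    intro x hx
    have hxq : x ≤ -q := hx
    have hv : (v0 p q x : ℝ) = p * q * Real.exp x := by
      unfold v0
      rcases lt_or_eq_of_le hxq with h | h
      · simp [h]
      · rw [if_neg (by simp [h]), if_pos (by linarith)]
        rw [h]; ring_nf
    rw [hf]; simp only [hv]
    rw [show c₁ * x = ↑x + -Complex.I * x * ξ by rw [hc₁]; push_cast; ring, Complex.exp_add]
    push_cast [Complex.ofReal_exp]
    ring
  have hE3 : ∀ x ∈ Ioi q, f x = -(p * q : ℂ) * Complex.exp (c₃ * x) := by
    intro x hx
    have hxq : q < x := hx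
    have hv : (v0 p q x : ℝ) = -(p * q) * Real.exp (-x) := by
      unfold v0
      rw [if_neg (by linarith), if_neg (by linarith)]
      ring
    rw [hf]; simp only [hv]
    rw [show c₃ * x = ↑(-x) + -Complex.I * x * ξ by rw [hc₃]; push_cast; ring, Complex.exp_add]
    push_cast [Complex.ofReal_exp]
    ring
  have hE2 : ∀ x ∈ Icc (-q) q, f x =
      (-(p : ℂ) * (Real.exp (-q) : ℂ)) * (↑x * Complex.exp (c₂ * x)) := by
    intro x hx
    have hv : (v0 p q x : ℝ) = -p * Real.exp (-q) * x := by
      unfold v0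
      rw [if_neg (by push_neg; exact hx.1), if_pos hx.2]
    rw [hf]; simp only [hv]
    rw [show c₂ * x = -Complex.I * x * ξ by rw [hc₂]; push_cast; ring]
    push_cast [Complex.ofReal_exp]
    ring
  -- integrability
  have hI1 : IntegrableOn f (Iic (-q)) := by
    exact IntegrableOn.congr_fun ((integrableOn_cexp_Iic hc₁re (-q)).const_mul (p * q : ℂ))
      (fun x hx => (hE1 x hx).symm) measurableSet_Iic
  have hI3 : IntegrableOn f (Ioi q) := by
    exact IntegrableOn.congr_fun ((integrableOn_cexp_Ioi hc₃re q).const_mul (-(p * q) : ℂ))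
      (fun x hx => (hE3 x hx).symm) measurableSet_Ioi
  have hImid : IntegrableOn f (Icc (-q) q) := by
    have hcont : Continuous fun x : ℝ =>
        (-(p : ℂ) * (Real.exp (-q) : ℂ)) * (↑x * Complex.exp (c₂ * x)) := by
      continuity
    exact IntegrableOn.congr_fun hcont.integrableOn_Icc
      (fun x hx => (hE2 x hx).symm) measurableSet_Icc
  have hIq : IntegrableOn f (Iic q) := by
    refine (hI1.union hImid).mono_set ?_
    rw [Iic_union_Icc_eq_Iic hq']
  -- split the integral
  have hsplit : (∫ x : ℝ, f x) = (∫ x in Iic (-q), f x) + (∫ x in (-q)..q, f x)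
      + ∫ x in Ioi q, f x := by
    rw [← intervalIntegral.integral_Iic_add_Ioi hIq hI3, ← intervalIntegral.integral_Iic_sub_Iic hI1 hIq]
    ring
  -- values of the three integrals
  have hV1 : (∫ x in Iic (-q), f x) = (p * q : ℂ) * (Complex.exp (c₁ * ((-q : ℝ) : ℂ)) / c₁) := by
    rw [setIntegral_congr_fun measurableSet_Iic hE1, integral_const_mul,
      integral_cexp_Iic hc₁re]
  have hV3 : (∫ x in Ioi q, f x) = -(p * q : ℂ) * (-Complex.exp (c₃ * ((q : ℝ) : ℂ)) / c₃) := by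
    rw [setIntegral_congr_fun measurableSet_Ioi hE3, integral_const_mul,
      integral_cexp_Ioi hc₃re]
  have hV2 : (∫ x in (-q)..q, f x) = (-(p : ℂ) * (Real.exp (-q) : ℂ)) *
      ((c₂ * q - 1) / c₂ ^ 2 * Complex.exp (c₂ * ((q : ℝ) : ℂ))
        - (c₂ * ((-q : ℝ) : ℂ) - 1) / c₂ ^ 2 * Complex.exp (c₂ * ((-q : ℝ) : ℂ))) := by
    have hEq : Set.EqOn f
        (fun x : ℝ => (-(p : ℂ) * (Real.exp (-q) : ℂ)) * (↑x * Complex.exp (c₂ * ↑x)))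
        (Set.uIcc (-q) q) := by
      rw [Set.uIcc_of_le hq']; exact hE2
    rw [intervalIntegral.integral_congr hEq, intervalIntegral.integral_const_mul]
    have hderiv : ∀ x ∈ Set.uIcc (-q) q,
        HasDerivAt (fun x : ℝ => (c₂ * ↑x - 1) / c₂ ^ 2 * Complex.exp (c₂ * ↑x))
          (↑x * Complex.exp (c₂ * ↑x)) x := by
      intro x _
      have hC : HasDerivAt (fun z : ℂ => Complex.exp (c₂ * z))
          (c₂ * Complex.exp (c₂ * ↑x)) (x : ℂ) := by
        simpa [Function.comp_def, mul_comm] using (Complex.hasDerivAt_exp (c₂ * x)).comp (x : ℂ)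
          ((hasDerivAt_id (x : ℂ)).const_mul c₂)
      have hL : HasDerivAt (fun z : ℂ => (c₂ * z - 1) / c₂ ^ 2) (c₂ / c₂ ^ 2) (x : ℂ) := by
        simpa using (((hasDerivAt_id (x : ℂ)).const_mul c₂).sub_const 1).div_const (c₂ ^ 2)
      have hM := hL.mul hC
      have h9 : c₂ / c₂ ^ 2 * Complex.exp (c₂ * ↑x)
          + (c₂ * ↑x - 1) / c₂ ^ 2 * (c₂ * Complex.exp (c₂ * ↑x))
          = ↑x * Complex.exp (c₂ * ↑x) := by
        field_simp
        ring
      rw [h9] at hM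
      exact hM.comp_ofReal
    have hcont2 : Continuous fun x : ℝ => (x : ℂ) * Complex.exp (c₂ * ↑x) :=
      Complex.continuous_ofReal.mul
        (Complex.continuous_exp.comp (continuous_const.mul Complex.continuous_ofReal))
    rw [intervalIntegral.integral_eq_sub_of_hasDerivAt hderiv
      (hcont2.intervalIntegrable _ _)]
  rw [hsplit, hV1, hV2, hV3]
  -- expand the exponentials
  have hθ1 : Complex.exp (c₁ * ((-q : ℝ) : ℂ)) = (Real.exp (-q) : ℂ) *
      ((Real.cos (q * ξ) : ℂ) + (Real.sin (q * ξ) : ℂ) * Complex.I) := by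
    rw [show c₁ * ((-q : ℝ) : ℂ) = ((-q : ℝ) : ℂ) + ((q * ξ : ℝ) : ℂ) * Complex.I by
      rw [hc₁]; push_cast; ring, Complex.exp_add, Complex.exp_mul_I]
    push_cast [Complex.ofReal_exp, Complex.ofReal_cos, Complex.ofReal_sin]
    ring
  have hθ3 : Complex.exp (c₃ * ((q : ℝ) : ℂ)) = (Real.exp (-q) : ℂ) *
      ((Real.cos (q * ξ) : ℂ) - (Real.sin (q * ξ) : ℂ) * Complex.I) := by
    rw [show c₃ * ((q : ℝ) : ℂ) = ((-q : ℝ) : ℂ) + ((-(q * ξ) : ℝ) : ℂ) * Complex.I by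
      rw [hc₃]; push_cast; ring, Complex.exp_add, Complex.exp_mul_I]
    push_cast [Complex.ofReal_exp, Complex.ofReal_cos, Complex.ofReal_sin]
    simp [Complex.cos_neg, Complex.sin_neg]
    ring
  have hθ2a : Complex.exp (c₂ * ((q : ℝ) : ℂ)) =
      (Real.cos (q * ξ) : ℂ) - (Real.sin (q * ξ) : ℂ) * Complex.I := by
    rw [show c₂ * ((q : ℝ) : ℂ) = ((-(q * ξ) : ℝ) : ℂ) * Complex.I by
      rw [hc₂]; push_cast; ring, Complex.exp_mul_I]
    push_cast [Complex.ofReal_cos, Complex.ofReal_sin]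
    simp [Complex.cos_neg, Complex.sin_neg]
    ring
  have hθ2b : Complex.exp (c₂ * ((-q : ℝ) : ℂ)) =
      (Real.cos (q * ξ) : ℂ) + (Real.sin (q * ξ) : ℂ) * Complex.I := by
    rw [show c₂ * ((-q : ℝ) : ℂ) = ((q * ξ : ℝ) : ℂ) * Complex.I by
      rw [hc₂]; push_cast; ring, Complex.exp_mul_I]
    push_cast [Complex.ofReal_cos, Complex.ofReal_sin]
    ring
  rw [hθ1, hθ3, hθ2a, hθ2b]
  -- final algebra
  have hc₁0 : c₁ ≠ 0 := fun h => by simpa [h] using hc₁re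
  have hc₃0 : c₃ ≠ 0 := fun h => by simpa [h] using hc₃re
  have hden : ((1 : ℂ) + (ξ : ℂ) ^ 2) ≠ 0 := by
    have : ((1 : ℂ) + (ξ : ℂ) ^ 2) = (((1 + ξ ^ 2 : ℝ)) : ℂ) := by push_cast; ring
    rw [this]
    exact Complex.ofReal_ne_zero.mpr (by positivity)
  have hfac : c₁ * c₃ = -(1 + (ξ : ℂ) ^ 2) := by
    rw [hc₁, hc₃]; ring_nf; rw [Complex.I_sq]; ring
  rw [hc₁, hc₂, hc₃]
  push_cast
  have hI2 : Complex.I ^ 2 = -1 := Complex.I_sq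
  have hI3 : Complex.I ^ 3 = -Complex.I := by rw [pow_succ, hI2]; ring
  have hI4 : Complex.I ^ 4 = 1 := by rw [pow_succ, hI3]; simp [Complex.I_mul_I]
  have hI5 : Complex.I ^ 5 = Complex.I := by rw [pow_succ, hI4]; ring
  have hI6 : Complex.I ^ 6 = -1 := by rw [pow_succ, hI5]; simp [Complex.I_mul_I]
  have hA : (1 - Complex.I * (ξ : ℂ)) ≠ 0 := by rw [← hc₁]; exact hc₁0
  have hA' : (1 - (ξ : ℂ) * Complex.I) ≠ 0 := by rw [mul_comm]; exact hA
  have hB : (-1 - Complex.I * (ξ : ℂ)) ≠ 0 := by rw [← hc₃]; exact hc₃0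
  have hB' : (-1 - (ξ : ℂ) * Complex.I) ≠ 0 := by rw [mul_comm]; exact hB
  field_simp
  ring_nf
  simp only [hI2, hI3, hI4, hI5, hI6]
  ring
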